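/- For any graph G, E(G) ≥ 2μ(G), where μ(G) is the matching number of G. -/

import Mathlib

open Finset Matrix

noncomputable section

variable {V : Type*} [Fintype V] [DecidableEq V]

/-- The adjacency matrix of a simple graph is Hermitian (over ℝ). -/
theorem SimpleGraph.isHermitian_adjMatrix' (G : SimpleGraph V) [DecidableRel G.Adj] :
    (G.adjMatrix ℝ).IsHermitian := by
  rw [Matrix.IsHermitian, Matrix.conjTranspose_eq_transpose_of_trivial]
  exact G.isSymm_adjMatrix

/-- The energy of a graph: the sum of the absolute values of the
eigenvalues of its adjacency matrix. -/
def SimpleGraph.energy (G : SimpleGraph V) [DecidableRel G.Adj] : ℝ :=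
  ∑ k, |G.isHermitian_adjMatrix'.eigenvalues k|

/-- The Randić index of a graph: the sum over the (unordered) edges `(i,j)`
of `1/√(deg i · deg j)`. -/
def SimpleGraph.randic (G : SimpleGraph V) [DecidableRel G.Adj] : ℝ :=
  ∑ e ∈ G.edgeFinset,
    Sym2.lift ⟨fun i j => 1 / Real.sqrt (G.degree i * G.degree j),
      fun i j => by simp [mul_comm]⟩ e

end

section Aux

variable {V : Type*} [Fintype V] [DecidableEq V]

/-- A symmetric entrywise-nonnegative matrix with row sums at most 1 has quadratic form
bounded by the squared norm. -/
lemma quad_bound (B : Matrix V V ℝ) (hsym : ∀ i j, B i j = B j i)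
    (hpos : ∀ i j, 0 ≤ B i j) (hrow : ∀ i, ∑ j, B i j ≤ 1) (u : V → ℝ) :
    |∑ i, ∑ j, B i j * u i * u j| ≤ ∑ i, u i ^ 2 := by
  have h1 : |∑ i, ∑ j, B i j * u i * u j| ≤ ∑ i, ∑ j, B i j * |u i| * |u j| := by
    calc |∑ i, ∑ j, B i j * u i * u j| ≤ ∑ i, |∑ j, B i j * u i * u j| :=
          Finset.abs_sum_le_sum_abs _ _
    _ ≤ ∑ i, ∑ j, |B i j * u i * u j| :=
          Finset.sum_le_sum fun i _ => Finset.abs_sum_le_sum_abs _ _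
    _ = ∑ i, ∑ j, B i j * |u i| * |u j| := by
          refine Finset.sum_congr rfl fun i _ => Finset.sum_congr rfl fun j _ => ?_
          rw [abs_mul, abs_mul, abs_of_nonneg (hpos i j)]
  have h2 : ∑ i, ∑ j, B i j * |u i| * |u j| ≤
      ∑ i, ∑ j, (B i j * u i ^ 2 / 2 + B i j * u j ^ 2 / 2) := by
    refine Finset.sum_le_sum fun i _ => Finset.sum_le_sum fun j _ => ?_
    nlinarith [sq_nonneg (|u i| - |u j|), sq_abs (u i), sq_abs (u j), hpos i j,
      mul_le_mul_of_nonneg_left (sq_nonneg (|u i| - |u j|)) (hpos i j)]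
  have h3 : ∑ i, ∑ j, (B i j * u i ^ 2 / 2 + B i j * u j ^ 2 / 2) ≤ ∑ i, u i ^ 2 := by
    have e1 : ∑ i, ∑ j, B i j * u i ^ 2 / 2 ≤ ∑ i, u i ^ 2 / 2 := by
      refine Finset.sum_le_sum fun i _ => ?_
      rw [show ∑ j, B i j * u i ^ 2 / 2 = (∑ j, B i j) * (u i ^ 2 / 2) by
        rw [Finset.sum_mul]; exact Finset.sum_congr rfl fun j _ => by ring]
      calc (∑ j, B i j) * (u i ^ 2 / 2) ≤ 1 * (u i ^ 2 / 2) :=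
            mul_le_mul_of_nonneg_right (hrow i) (by positivity)
      _ = u i ^ 2 / 2 := one_mul _
    have e2 : ∑ i, ∑ j, B i j * u j ^ 2 / 2 ≤ ∑ i, u i ^ 2 / 2 := by
      rw [Finset.sum_comm]
      refine Finset.sum_le_sum fun j _ => ?_
      rw [show ∑ i, B i j * u j ^ 2 / 2 = (∑ i, B j i) * (u j ^ 2 / 2) by
        rw [Finset.sum_mul]; refine Finset.sum_congr rfl fun i _ => ?_
        rw [hsym j i]; ring]
      calc (∑ i, B j i) * (u j ^ 2 / 2) ≤ 1 * (u j ^ 2 / 2) :=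
            mul_le_mul_of_nonneg_right (hrow j) (by positivity)
      _ = u j ^ 2 / 2 := one_mul _
    calc ∑ i, ∑ j, (B i j * u i ^ 2 / 2 + B i j * u j ^ 2 / 2)
        = (∑ i, ∑ j, B i j * u i ^ 2 / 2) + ∑ i, ∑ j, B i j * u j ^ 2 / 2 := by
          rw [← Finset.sum_add_distrib]
          exact Finset.sum_congr rfl fun i _ => Finset.sum_add_distrib
    _ ≤ ∑ i, u i ^ 2 / 2 + ∑ i, u i ^ 2 / 2 := add_le_add e1 e2
    _ = ∑ i, u i ^ 2 := by rw [← Finset.sum_add_distrib]; exact Finset.sum_congr rfl fun i _ => by ring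
  linarith

end Aux

/-- For any graph `G`, `E(G) ≥ 2 μ(G)` where `μ(G)` is the matching number: for any
matching `M` in `G`, the energy is at least twice the number of edges of `M`. -/
theorem stmt8 {V : Type*} [Fintype V] [DecidableEq V]
    (G : SimpleGraph V) [DecidableRel G.Adj]
    (M : G.Subgraph) (hM : M.IsMatching) :
    2 * (M.edgeSet.ncard : ℝ) ≤ G.energy := by
  classical
  set A : Matrix V V ℝ := G.adjMatrix ℝ with hAdef
  have hA := G.isHermitian_adjMatrix'
  set H : SimpleGraph V := M.spanningCoe with hHdef
  haveI : DecidableRel H.Adj := fun a b => Classical.dec _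
  set B : Matrix V V ℝ := H.adjMatrix ℝ with hBdef
  have hHadj : ∀ i j, H.Adj i j ↔ M.Adj i j := fun i j => Iff.rfl
  have hBsym : ∀ i j, B i j = B j i := by
    intro i j; simp [hBdef, SimpleGraph.adjMatrix_apply, H.adj_comm]
  have hBpos : ∀ i j, 0 ≤ B i j := by
    intro i j; rw [hBdef, SimpleGraph.adjMatrix_apply]; split <;> norm_num
  have hBrow : ∀ i, ∑ j, B i j ≤ 1 := by
    intro i
    have : ∑ j, B i j = ((Finset.univ.filter (H.Adj i)).card : ℝ) := by
      simp [hBdef, SimpleGraph.adjMatrix_apply, Finset.sum_boole]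
    rw [this]
    have hcard : (Finset.univ.filter (H.Adj i)).card ≤ 1 := by
      refine Finset.card_le_one.mpr fun a ha b hb => ?_
      simp only [Finset.mem_filter] at ha hb
      have hia : M.Adj i a := (hHadj i a).mp ha.2
      have hib : M.Adj i b := (hHadj i b).mp hb.2
      exact ((hM (M.edge_vert hia)).unique hia hib)
    exact_mod_cast hcard
  -- trace (A * B) = 2 * ncard
  have htr : Matrix.trace (A * B) = 2 * (M.edgeSet.ncard : ℝ) := by
    have h1 : Matrix.trace (A * B) = ∑ i, ∑ j, A i j * B j i := by
      simp [Matrix.trace, Matrix.mul_apply, Matrix.diag]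
    have h2 : ∀ i j, A i j * B j i = if H.Adj i j then (1 : ℝ) else 0 := by
      intro i j
      by_cases h : H.Adj i j
      · have hG : G.Adj i j := M.adj_sub ((hHadj i j).mp h)
        simp [hAdef, hBdef, h, h.symm, hG]
      · have h' : ¬ H.Adj j i := fun hh => h hh.symm
        simp [hBdef, h', h]
    have h3 : Matrix.trace (A * B) = ∑ i, (H.degree i : ℝ) := by
      rw [h1]
      refine Finset.sum_congr rfl fun i _ => ?_
      rw [Finset.sum_congr rfl fun j _ => h2 i j]
      simp [SimpleGraph.degree, SimpleGraph.neighborFinset_eq_filter, Finset.sum_boole]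
    have h4 : ∑ i, H.degree i = 2 * H.edgeFinset.card :=
      SimpleGraph.sum_degrees_eq_twice_card_edges H
    have h5 : H.edgeSet = M.edgeSet := by
      ext e
      induction e with
      | _ x y => simp [SimpleGraph.mem_edgeSet, SimpleGraph.Subgraph.mem_edgeSet, hHadj]
    have h6 : (M.edgeSet.ncard : ℝ) = (H.edgeFinset.card : ℝ) := by
      rw [← h5, SimpleGraph.edgeFinset, Set.ncard_eq_toFinset_card']
    rw [h3, h6, ← Nat.cast_sum, h4]
    push_cast
    ring
  -- spectral decomposition
  set U : Matrix V V ℝ := (hA.eigenvectorUnitary : Matrix V V ℝ) with hUdef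
  have hUstar : star U = Uᵀ := by
    rw [← Matrix.conjTranspose_eq_transpose_of_trivial]; rfl
  have hUunit : Uᵀ * U = 1 := by
    rw [← hUstar]
    exact_mod_cast Unitary.coe_star_mul_self hA.eigenvectorUnitary
  have hUunit' : U * Uᵀ = 1 := by
    rw [← hUstar]
    exact_mod_cast Unitary.coe_mul_star_self hA.eigenvectorUnitary
  have hcolnorm : ∀ k, ∑ i, U i k ^ 2 = 1 := by
    intro k
    have := congrFun (congrFun hUunit k) k
    simp only [Matrix.mul_apply, Matrix.transpose_apply, Matrix.one_apply_eq] at this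
    rw [← this]
    exact Finset.sum_congr rfl fun i _ => by ring
  have hspec : A = U * Matrix.diagonal hA.eigenvalues * Uᵀ := by
    have := hA.spectral_theorem
    rw [Unitary.conjStarAlgAut_apply, hUstar] at this
    simpa using this
  set C : Matrix V V ℝ := Uᵀ * B * U with hCdef
  have htr2 : Matrix.trace (A * B) = ∑ k, hA.eigenvalues k * C k k := by
    rw [hspec]
    have : U * Matrix.diagonal hA.eigenvalues * Uᵀ * B =
        U * (Matrix.diagonal hA.eigenvalues * (Uᵀ * B)) := by
      simp only [Matrix.mul_assoc]
    rw [this, Matrix.trace_mul_comm]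
    rw [show Matrix.diagonal hA.eigenvalues * (Uᵀ * B) * U =
      Matrix.diagonal hA.eigenvalues * C by rw [hCdef]; simp only [Matrix.mul_assoc]]
    simp [Matrix.trace, Matrix.diag, Matrix.diagonal_mul]
  have hCk : ∀ k, |C k k| ≤ 1 := by
    intro k
    have hCkk : C k k = ∑ i, ∑ j, B i j * U i k * U j k := by
      simp only [hCdef, Matrix.mul_apply, Matrix.transpose_apply, Finset.sum_mul]
      rw [Finset.sum_comm]
      refine Finset.sum_congr rfl fun i _ => Finset.sum_congr rfl fun j _ => by ring
    rw [hCkk]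
    calc |∑ i, ∑ j, B i j * U i k * U j k| ≤ ∑ i, (U i k) ^ 2 :=
          quad_bound B hBsym hBpos hBrow (fun i => U i k)
    _ = 1 := hcolnorm k
  -- conclude
  rw [← htr, htr2]
  calc ∑ k, hA.eigenvalues k * C k k ≤ ∑ k, |hA.eigenvalues k| := by
        refine Finset.sum_le_sum fun k _ => ?_
        calc hA.eigenvalues k * C k k ≤ |hA.eigenvalues k * C k k| := le_abs_self _
        _ = |hA.eigenvalues k| * |C k k| := abs_mul _ _
        _ ≤ |hA.eigenvalues k| * 1 := mul_le_mul_of_nonneg_left (hCk k) (abs_nonneg _)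
        _ = |hA.eigenvalues k| := mul_one _
  _ = G.energy := rfl
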